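/- arXiv:1806.10824 — 2 statements merged into one kernel-verified Lean document; each statement's English description precedes it below -/
import Mathlib

section
/- There is an absolute constant c such that for every natural number n ≥ 4 with binary digits ε_j(n), the function H_n^{(21)}(t) := Σ_{j=2}^{|n|} ε_j(n) (D_{2^j}(t)/n(j-1)) Π_{s=j+1}^{|n|} ρ_s(t)^{ε_s(n)} satisfies ∫_0^1 |H_n^{(21)}(t)| dt ≤ c·|n|. -/
open MeasureTheory Finset Filter Set

noncomputable section

/-- `k`-th binary digit of `x ∈ [0,1)`. -/
def xdigit (k : ℕ) (x : ℝ) : ℕ := ⌊x * 2 ^ (k + 1)⌋.toNat % 2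

/-- Rademacher function `ρ_k(x) = (-1)^{x_k}`. -/
def rademacher (k : ℕ) (x : ℝ) : ℝ := (-1 : ℝ) ^ xdigit k x

/-- `j`-th binary digit of the natural number `n`. -/
def eps (j n : ℕ) : ℕ := n / 2 ^ j % 2

/-- Walsh-Paley function `w_n(x) = ∏_k ρ_k(x)^{n_k}`. -/
def walsh (n : ℕ) (x : ℝ) : ℝ := ∏ k ∈ Finset.range (n + 1), rademacher k x ^ eps k n

/-- Walsh-Dirichlet kernel `D_n(x) = ∑_{m<n} w_m(x)`. -/
def Dker (n : ℕ) (x : ℝ) : ℝ := ∑ m ∈ Finset.range n, walsh m x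

/-- `l_m = ∑_{k=1}^{m-1} 1/k`. -/
def lsum (m : ℕ) : ℝ := ∑ k ∈ Finset.Ico 1 m, (1 : ℝ) / k

/-- Logarithmic variation `V_L(n)`; note `n(k-1) = n % 2^k`. -/
def VL (n : ℕ) : ℝ :=
  (1 / (Nat.log 2 n : ℝ)) *
    ∑ k ∈ Finset.Icc 1 (Nat.log 2 n),
      |(eps k n : ℝ) - (eps (k + 1) n : ℝ)| * lsum (n % 2 ^ k)

lemma eps_of_lt {j n : ℕ} (h : n < 2 ^ j) : eps j n = 0 := by
  unfold eps; rw [Nat.div_eq_of_lt h]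

lemma abs_rademacher (k : ℕ) (x : ℝ) : |rademacher k x| = 1 := by
  unfold rademacher; rw [abs_pow, abs_neg, abs_one, one_pow]

lemma measurable_rademacher (k : ℕ) : Measurable (rademacher k) := by
  have h1 : Measurable fun x : ℝ => ⌊x * 2 ^ (k+1)⌋ :=
    Int.measurable_floor.comp (measurable_id.mul_const _)
  have : rademacher k = (fun i : ℤ => (-1:ℝ) ^ (i.toNat % 2)) ∘ (fun x : ℝ => ⌊x * 2 ^ (k+1)⌋) := rfl
  rw [this]
  exact measurable_from_top.comp h1

lemma measurable_Dker (n : ℕ) : Measurable (Dker n) := by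
  unfold Dker walsh
  exact Finset.measurable_sum _ fun m _ =>
    Finset.measurable_prod _ fun k _ => (measurable_rademacher k).pow_const _

lemma walsh_eq_prod {n N : ℕ} (h : n < 2 ^ N) (x : ℝ) :
    walsh n x = ∏ k ∈ Finset.range N, rademacher k x ^ eps k n := by
  unfold walsh
  rcases le_total (n + 1) N with hle | hle
  · apply Finset.prod_subset (Finset.range_subset_range.mpr hle)
    intro k _ hk
    simp only [Finset.mem_range, not_lt] at hk
    rw [eps_of_lt (lt_of_lt_of_le (Nat.lt_two_pow_self (n := n)) (pow_le_pow_right₀ one_le_two (by omega))), pow_zero]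
  · symm
    apply Finset.prod_subset (Finset.range_subset_range.mpr hle)
    intro k _ hk
    simp only [Finset.mem_range, not_lt] at hk
    rw [eps_of_lt (lt_of_lt_of_le h (pow_le_pow_right₀ one_le_two hk)), pow_zero]

lemma eps_pow_add_lt {j k m : ℕ} (hk : k < j) (hm : m < 2 ^ j) :
    eps k (2 ^ j + m) = eps k m := by
  unfold eps
  have h1 : 2 ^ j + m = m + 2 ^ (j - k) * 2 ^ k := by
    rw [← pow_add, Nat.sub_add_cancel hk.le]; omega
  rw [h1, Nat.add_mul_div_right _ _ (pow_pos (by norm_num : (0:ℕ) < 2) k)]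
  obtain ⟨d, hd⟩ : 2 ∣ 2 ^ (j - k) := dvd_pow_self 2 (by omega)
  rw [hd]; omega

lemma eps_pow_add_self {j m : ℕ} (hm : m < 2 ^ j) : eps j (2 ^ j + m) = 1 := by
  unfold eps
  rw [add_comm, Nat.add_div_right _ (pow_pos (by norm_num : (0:ℕ) < 2) j),
    Nat.div_eq_of_lt hm]

lemma Dker_pow (j : ℕ) (x : ℝ) :
    Dker (2 ^ j) x = ∏ k ∈ Finset.range j, (1 + rademacher k x) := by
  induction j with
  | zero => simp [Dker, walsh, eps]
  | succ j ih =>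
    have hsplit : (2:ℕ) ^ (j+1) = 2 ^ j + 2 ^ j := by ring
    unfold Dker
    rw [hsplit, Finset.sum_range_add]
    have hterm : ∀ m ∈ Finset.range (2^j), walsh (2^j + m) x = walsh m x * rademacher j x := by
      intro m hm
      rw [Finset.mem_range] at hm
      have h2 : 2 ^ j + m < 2 ^ (j+1) := by rw [hsplit]; omega
      rw [walsh_eq_prod h2, walsh_eq_prod (lt_of_lt_of_le hm (by rw [hsplit]; omega) : m < 2^(j+1)),
        Finset.prod_range_succ, Finset.prod_range_succ]
      rw [eps_pow_add_self hm, eps_of_lt hm, pow_one, pow_zero, mul_one]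
      congr 1
      exact Finset.prod_congr rfl fun k hk =>
        by rw [eps_pow_add_lt (Finset.mem_range.mp hk) hm]
    rw [Finset.sum_congr rfl hterm, ← Finset.sum_mul, Finset.prod_range_succ, ← ih]
    unfold Dker
    ring

lemma prod_one_add_rademacher {x : ℝ} (hx : x ∈ Set.Ico (0:ℝ) 1) (j : ℕ) :
    ∏ k ∈ Finset.range j, (1 + rademacher k x) =
      if x * 2 ^ j < 1 then (2:ℝ) ^ j else 0 := by
  obtain ⟨hx0, hx1⟩ := hx
  induction j with
  | zero => simp [hx1]
  | succ j ih =>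
    rw [Finset.prod_range_succ, ih]
    have hp : (2:ℝ) ^ (j+1) = 2 ^ j * 2 := pow_succ _ _
    by_cases h : x * 2 ^ j < 1
    · by_cases h2 : x * 2 ^ (j+1) < 1
      · have hf : ⌊x * 2 ^ (j+1)⌋ = 0 :=
          Int.floor_eq_zero_iff.mpr (Set.mem_Ico.mpr ⟨by positivity, h2⟩)
        have hd : xdigit j x = 0 := by unfold xdigit; rw [hf]; rfl
        simp only [if_pos h, if_pos h2, rademacher, hd, pow_zero]
        ring
      · have h1 : (1:ℝ) ≤ x * 2 ^ (j+1) := not_lt.mp h2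
        have h2' : x * 2 ^ (j+1) < 2 := by rw [hp]; nlinarith
        have hf : ⌊x * 2 ^ (j+1)⌋ = 1 := by
          rw [Int.floor_eq_iff]
          push_cast; exact ⟨h1, by linarith⟩
        have hd : xdigit j x = 1 := by unfold xdigit; rw [hf]; rfl
        simp only [if_pos h, if_neg h2, rademacher, hd, pow_one]
        ring
    · have h2 : ¬ x * 2 ^ (j+1) < 1 := by
        rw [hp, ← mul_assoc]; intro hc; apply h; nlinarith [not_lt.mp h]
      simp [h, h2]

lemma Dker_eq_indicator {x : ℝ} (hx : x ∈ Set.Ico (0:ℝ) 1) (j : ℕ) :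
    Dker (2 ^ j) x = Set.indicator (Set.Ico (0:ℝ) (((2:ℝ) ^ j)⁻¹)) (fun _ => (2:ℝ)^j) x := by
  rw [Dker_pow, prod_one_add_rademacher hx]
  have hpos : (0:ℝ) < 2 ^ j := by positivity
  have key : ∀ y : ℝ, y < ((2:ℝ) ^ j)⁻¹ ↔ y * 2 ^ j < 1 := fun y => by
    rw [← one_div, lt_div_iff₀ hpos]
  by_cases h : x * 2 ^ j < 1
  · rw [if_pos h, Set.indicator_of_mem (Set.mem_Ico.mpr ⟨hx.1, (key x).mpr h⟩)]
  · rw [if_neg h, Set.indicator_of_notMem]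
    intro hc
    exact h ((key x).mp hc.2)

lemma integral_abs_Dker (j : ℕ) :
    ∫ t in Set.Ico (0:ℝ) 1, |Dker (2 ^ j) t| = 1 := by
  have hpos : (0:ℝ) < 2 ^ j := by positivity
  have hinv : ((2:ℝ) ^ j)⁻¹ ≤ 1 := inv_le_one_of_one_le₀ (one_le_pow₀ one_le_two)
  have heq : ∀ x ∈ Set.Ico (0:ℝ) 1, |Dker (2^j) x| =
      Set.indicator (Set.Ico (0:ℝ) (((2:ℝ)^j)⁻¹)) (fun _ => (2:ℝ)^j) x := by
    intro x hx
    rw [Dker_eq_indicator hx]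
    by_cases h : x ∈ Set.Ico (0:ℝ) (((2:ℝ)^j)⁻¹)
    · rw [Set.indicator_of_mem h]; exact abs_of_pos hpos
    · rw [Set.indicator_of_notMem h]; exact abs_zero
  rw [setIntegral_congr_fun measurableSet_Ico heq,
    setIntegral_indicator measurableSet_Ico,
    Set.Ico_inter_Ico, max_self, min_eq_right hinv,
    setIntegral_const, measureReal_def, Real.volume_Ico, smul_eq_mul, sub_zero,
    ENNReal.toReal_ofReal (by positivity)]
  field_simp

lemma abs_walsh (n : ℕ) (x : ℝ) : |walsh n x| = 1 := by
  unfold walsh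
  rw [Finset.abs_prod]
  exact Finset.prod_eq_one fun k _ => by rw [abs_pow, abs_rademacher, one_pow]

lemma abs_Dker_le (m : ℕ) (x : ℝ) : |Dker m x| ≤ m := by
  unfold Dker
  calc |∑ k ∈ Finset.range m, walsh k x| ≤ ∑ k ∈ Finset.range m, |walsh k x| :=
        Finset.abs_sum_le_sum_abs _ _
    _ = m := by
        rw [Finset.sum_congr rfl fun k _ => abs_walsh k x, Finset.sum_const,
          Finset.card_range, nsmul_eq_mul, mul_one]

lemma abs_term_le (n j : ℕ) (t : ℝ) :
    |(eps j n : ℝ) * Dker (2 ^ j) t / ((n % 2 ^ j : ℕ) : ℝ) *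
        ∏ s ∈ Finset.Icc (j + 1) (Nat.log 2 n), rademacher s t ^ eps s n| ≤
      |Dker (2 ^ j) t| := by
  rw [abs_mul, abs_div, abs_mul]
  have hP : |∏ s ∈ Finset.Icc (j + 1) (Nat.log 2 n), rademacher s t ^ eps s n| = 1 := by
    rw [Finset.abs_prod]
    exact Finset.prod_eq_one fun s _ => by rw [abs_pow, abs_rademacher, one_pow]
  rw [hP, mul_one]
  rcases Nat.eq_zero_or_pos (n % 2 ^ j) with h | h
  · rw [h]; simp
  · have hm0 : (0:ℝ) < |((n % 2 ^ j : ℕ) : ℝ)| := by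
      rw [Nat.abs_cast]; exact_mod_cast h
    have hm1 : (1:ℝ) ≤ |((n % 2 ^ j : ℕ) : ℝ)| := by
      rw [Nat.abs_cast]; exact_mod_cast h
    have he : |(eps j n : ℝ)| ≤ 1 := by
      rw [Nat.abs_cast]
      exact_mod_cast Nat.lt_succ_iff.mp (Nat.mod_lt _ (by norm_num) : eps j n < 2)
    rw [div_le_iff₀ hm0]
    nlinarith [abs_nonneg (Dker (2 ^ j) t)]

lemma integrableOn_abs_Dker (j : ℕ) :
    IntegrableOn (fun t => |Dker (2 ^ j) t|) (Set.Ico (0:ℝ) 1) := by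
  apply Measure.integrableOn_of_bounded (M := ((2:ℝ)^j)) measure_Ico_lt_top.ne
    ((measurable_Dker _).abs.aestronglyMeasurable)
  apply ae_of_all
  intro x
  rw [Real.norm_eq_abs, abs_abs]
  exact_mod_cast abs_Dker_le (2 ^ j) x

/-- `‖H_n^{(21)}‖_{L^1} ≤ c |n|`, where
`H_n^{(21)}(t) = ∑_{j=2}^{|n|} ε_j(n) (D_{2^j}(t)/n(j-1)) ∏_{s=j+1}^{|n|} ρ_s(t)^{ε_s(n)}`
and `n(j-1) = n % 2^j`. -/
theorem statement4 :
    ∃ c > (0 : ℝ), ∀ n : ℕ, 4 ≤ n →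
      (∫ t in Set.Ico (0 : ℝ) 1,
        |∑ j ∈ Finset.Icc 2 (Nat.log 2 n),
          (eps j n : ℝ) * Dker (2 ^ j) t / ((n % 2 ^ j : ℕ) : ℝ) *
            ∏ s ∈ Finset.Icc (j + 1) (Nat.log 2 n), rademacher s t ^ eps s n|)
        ≤ c * (Nat.log 2 n : ℝ) := by
  refine ⟨1, one_pos, fun n _ => ?_⟩
  set L := Nat.log 2 n with hL
  have key : (∫ t in Set.Ico (0 : ℝ) 1,
        |∑ j ∈ Finset.Icc 2 L,
          (eps j n : ℝ) * Dker (2 ^ j) t / ((n % 2 ^ j : ℕ) : ℝ) *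
            ∏ s ∈ Finset.Icc (j + 1) L, rademacher s t ^ eps s n|)
      ≤ ∫ t in Set.Ico (0 : ℝ) 1, ∑ j ∈ Finset.Icc 2 L, |Dker (2 ^ j) t| := by
    apply integral_mono_of_nonneg
    · exact ae_of_all _ fun t => abs_nonneg _
    · exact integrable_finset_sum _ fun j _ => integrableOn_abs_Dker j
    · exact ae_of_all _ fun t => (Finset.abs_sum_le_sum_abs _ _).trans
        (Finset.sum_le_sum fun j _ => abs_term_le n j t)
  rw [integral_finset_sum _ (fun j _ => integrableOn_abs_Dker j)] at key
  have hsum : ∑ j ∈ Finset.Icc 2 L, ∫ t in Set.Ico (0:ℝ) 1, |Dker (2 ^ j) t|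
      = ((Finset.Icc 2 L).card : ℝ) := by
    rw [Finset.sum_congr rfl fun j _ => integral_abs_Dker j, Finset.sum_const,
      nsmul_eq_mul, mul_one]
  rw [hsum, Nat.card_Icc] at key
  refine key.trans ?_
  rw [one_mul]
  exact_mod_cast Nat.cast_le.mpr (show L + 1 - 2 ≤ L by omega)
end
end

section
/- For the sequence n_A := 2^A − 1 (A ≥ 2): the quantity (1/|n_A|) Σ_{k=1}^{|n_A|} ε_k(n_A) l_{n_A(k-1)} tends to infinity as A → ∞, while V_L(n_A) = (1/|n_A|) Σ_{k=1}^{|n_A|} |ε_k(n_A) − ε_{k+1}(n_A)| l_{n_A(k-1)} is bounded (in fact V_L(n_A) = l_{2^{A-1}-1}/(A-1)). -/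
open MeasureTheory Finset Filter Set

noncomputable section

section Statement11Aux

lemma lsum_nonneg (m : ℕ) : 0 ≤ lsum m := by
  apply Finset.sum_nonneg; intro i _; positivity

lemma lsum_mono {m m' : ℕ} (h : m ≤ m') : lsum m ≤ lsum m' := by
  apply Finset.sum_le_sum_of_subset_of_nonneg (Finset.Ico_subset_Ico le_rfl h)
  intro i _ _; positivity

lemma card_Ico_pow (s : ℕ) : (Finset.Ico (2^s) (2^(s+1))).card = 2^s := by
  rw [Nat.card_Ico]; have := pow_succ 2 s; omega

lemma lsum_split (s : ℕ) :
    lsum (2^(s+1)) = lsum (2^s) + ∑ k ∈ Finset.Ico (2^s : ℕ) (2^(s+1)), (1:ℝ)/(k:ℝ) := by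
  rw [lsum, lsum, ← Finset.sum_Ico_consecutive _ (Nat.one_le_two_pow)
    (Nat.pow_le_pow_right (by norm_num) (Nat.le_succ s))]

lemma lsum_pow_lower (s : ℕ) : (s : ℝ) / 2 ≤ lsum (2 ^ s) := by
  induction s with
  | zero => simp [lsum]
  | succ s ih =>
    rw [lsum_split]
    have h2 : (1:ℝ)/2 ≤ ∑ k ∈ Finset.Ico (2^s : ℕ) (2^(s+1)), (1:ℝ)/(k:ℝ) := by
      have hb : ∀ k ∈ Finset.Ico (2^s : ℕ) (2^(s+1)), (1:ℝ)/(2^(s+1)) ≤ 1/(k:ℝ) := by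
        intro k hk
        rw [Finset.mem_Ico] at hk
        have hk0 : 0 < k := by have := Nat.one_le_two_pow (n := s); omega
        apply one_div_le_one_div_of_le (by exact_mod_cast hk0)
        exact_mod_cast hk.2.le
      have hle := Finset.card_nsmul_le_sum (Finset.Ico (2^s : ℕ) (2^(s+1)))
        (fun k => (1:ℝ)/(k:ℝ)) _ hb
      rw [card_Ico_pow, nsmul_eq_mul] at hle
      calc (1:ℝ)/2 = ((2^s : ℕ) : ℝ) * ((1:ℝ)/(2^(s+1))) := by
            push_cast [pow_succ]; field_simp
        _ ≤ _ := hle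
    push_cast
    linarith

lemma lsum_pow_upper (s : ℕ) : lsum (2 ^ s) ≤ s := by
  induction s with
  | zero => simp [lsum]
  | succ s ih =>
    rw [lsum_split]
    have h2 : ∑ k ∈ Finset.Ico (2^s : ℕ) (2^(s+1)), (1:ℝ)/(k:ℝ) ≤ 1 := by
      have hb : ∀ k ∈ Finset.Ico (2^s : ℕ) (2^(s+1)), (1:ℝ)/(k:ℝ) ≤ 1/(2^s) := by
        intro k hk
        rw [Finset.mem_Ico] at hk
        apply one_div_le_one_div_of_le (by positivity)
        exact_mod_cast hk.1
      have hle := Finset.sum_le_card_nsmul (Finset.Ico (2^s : ℕ) (2^(s+1)))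
        (fun k => (1:ℝ)/(k:ℝ)) _ hb
      rw [card_Ico_pow, nsmul_eq_mul] at hle
      calc ∑ k ∈ Finset.Ico (2^s : ℕ) (2^(s+1)), (1:ℝ)/(k:ℝ)
          ≤ ((2^s : ℕ) : ℝ) * ((1:ℝ)/(2^s)) := hle
        _ = 1 := by push_cast; field_simp
    push_cast
    linarith

lemma eps_lt {j A : ℕ} (h : j < A) : eps j (2^A - 1) = 1 := by
  obtain ⟨q, hq⟩ : ∃ q, 2^(A-j) = q + 1 := ⟨2^(A-j) - 1, by
    have : (1:ℕ) ≤ 2^(A-j) := Nat.one_le_two_pow; omega⟩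
  have h3 : (1:ℕ) ≤ 2^j := Nat.one_le_two_pow
  have h2 : 2^j * (q+1) = 2^A := by rw [← hq, ← pow_add]; congr 1; omega
  have h1 : 2^A - 1 = 2^j * q + (2^j - 1) := by
    rw [Nat.sub_eq_iff_eq_add Nat.one_le_two_pow, add_assoc,
      Nat.sub_add_cancel h3, ← Nat.mul_succ, h2]
  have hdiv : (2^A - 1) / 2^j = q := by
    rw [h1, Nat.mul_add_div (by omega), Nat.div_eq_of_lt (by omega)]
    omega
  rw [eps, hdiv]
  -- q + 1 = 2^(A-j) is even since A - j ≥ 1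
  have h5 : 2^(A-j) = 2 * 2^(A-j-1) := by
    rw [← pow_succ']; congr 1; omega
  have h6 : (1:ℕ) ≤ 2^(A-j-1) := Nat.one_le_two_pow
  omega

lemma eps_ge {j A : ℕ} (h : A ≤ j) : eps j (2^A - 1) = 0 := by
  have h5 : 2^A ≤ 2^j := Nat.pow_le_pow_right (by norm_num) h
  have h6 : (1:ℕ) ≤ 2^A := Nat.one_le_two_pow
  rw [eps, Nat.div_eq_of_lt (by omega)]

lemma mod_pow {k A : ℕ} (h : k ≤ A) : (2^A - 1) % 2^k = 2^k - 1 := by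
  obtain ⟨q, hq⟩ : ∃ q, 2^(A-k) = q + 1 := ⟨2^(A-k) - 1, by
    have : (1:ℕ) ≤ 2^(A-k) := Nat.one_le_two_pow; omega⟩
  have h3 : (1:ℕ) ≤ 2^k := Nat.one_le_two_pow
  have h2 : 2^k * (q+1) = 2^A := by rw [← hq, ← pow_add]; congr 1; omega
  have h1 : 2^A - 1 = 2^k * q + (2^k - 1) := by
    rw [Nat.sub_eq_iff_eq_add Nat.one_le_two_pow, add_assoc,
      Nat.sub_add_cancel h3, ← Nat.mul_succ, h2]
  rw [h1, Nat.mul_add_mod, Nat.mod_eq_of_lt (by omega)]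

lemma log_pow_sub_one {A : ℕ} (h : 2 ≤ A) : Nat.log 2 (2^A - 1) = A - 1 := by
  have hA : A - 1 + 1 = A := by omega
  have h5 : 2^(A-1) * 2 = 2^A := by rw [← pow_succ, hA]
  have h6 : (1:ℕ) ≤ 2^(A-1) := Nat.one_le_two_pow
  apply Nat.log_eq_of_pow_le_of_lt_pow
  · omega
  · rw [hA]; omega

lemma sum_Icc_sub_one (m : ℕ) : ∑ k ∈ Finset.Icc 1 m, ((k:ℝ) - 1) = m * (m-1) / 2 := by
  induction m with
  | zero => simp
  | succ m ih =>
    rw [Finset.sum_Icc_succ_top (by omega), ih]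
    push_cast
    ring

end Statement11Aux

lemma cast_sub_one {A : ℕ} (h : 1 ≤ A) : ((A - 1 : ℕ) : ℝ) = (A : ℝ) - 1 := by
  rw [Nat.cast_sub h]; norm_num

lemma VL_formula {A : ℕ} (hA : 2 ≤ A) :
    VL (2 ^ A - 1) = lsum (2 ^ (A - 1) - 1) / ((A : ℝ) - 1) := by
  rw [VL, log_pow_sub_one hA]
  have hsum : ∑ k ∈ Finset.Icc 1 (A - 1),
      |(eps k (2^A - 1) : ℝ) - (eps (k+1) (2^A - 1) : ℝ)| * lsum ((2^A - 1) % 2 ^ k)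
      = lsum (2 ^ (A - 1) - 1) := by
    rw [Finset.sum_eq_single (A - 1)]
    · rw [eps_lt (by omega), eps_ge (by omega), mod_pow (by omega)]
      norm_num
    · intro k hk hne
      rw [Finset.mem_Icc] at hk
      rw [eps_lt (by omega), eps_lt (by omega)]
      simp
    · intro h
      exact absurd (Finset.mem_Icc.2 ⟨by omega, le_rfl⟩) h
  rw [hsum, cast_sub_one (by omega)]
  ring

/-- for `n_A = 2^A - 1`, Memic's quantity tends to infinity while
`V_L(n_A) = l_{2^{A-1}-1}/(A-1)` is bounded. -/
theorem statement11 :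
    Filter.Tendsto
      (fun A : ℕ =>
        (1 / (Nat.log 2 (2 ^ A - 1) : ℝ)) *
          ∑ k ∈ Finset.Icc 1 (Nat.log 2 (2 ^ A - 1)),
            (eps k (2 ^ A - 1) : ℝ) * lsum ((2 ^ A - 1) % 2 ^ k))
      Filter.atTop Filter.atTop ∧
    (∀ A : ℕ, 2 ≤ A → VL (2 ^ A - 1) = lsum (2 ^ (A - 1) - 1) / ((A : ℝ) - 1)) ∧
    (∃ C : ℝ, ∀ A : ℕ, VL (2 ^ A - 1) ≤ C) := by
  refine ⟨?_, fun A hA => VL_formula hA, ⟨1, fun A => ?_⟩⟩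
  · have hg : Filter.Tendsto (fun A : ℕ => ((A : ℝ) - 2) / 4) Filter.atTop Filter.atTop := by
      apply Filter.Tendsto.atTop_div_const (by norm_num)
      exact tendsto_atTop_add_const_right _ _ tendsto_natCast_atTop_atTop
    apply tendsto_atTop_mono' Filter.atTop ?_ hg
    filter_upwards [eventually_ge_atTop 3] with A hA
    have hlog := log_pow_sub_one (show 2 ≤ A by omega)
    rw [hlog]
    have hm1 : ((A - 1 : ℕ) : ℝ) = (A : ℝ) - 1 := cast_sub_one (by omega)
    have hApos : (0 : ℝ) < (A : ℝ) - 1 := by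
      have : (3 : ℝ) ≤ (A : ℝ) := by exact_mod_cast hA
      linarith
    have hSle : ∑ k ∈ Finset.Icc 1 (A - 1), ((k : ℝ) - 1) / 2
        ≤ ∑ k ∈ Finset.Icc 1 (A - 1),
            (eps k (2 ^ A - 1) : ℝ) * lsum ((2 ^ A - 1) % 2 ^ k) := by
      apply Finset.sum_le_sum
      intro k hk
      rw [Finset.mem_Icc] at hk
      rw [eps_lt (by omega), mod_pow (by omega)]
      have h1 : 2 ^ (k - 1) ≤ 2 ^ k - 1 := by
        have hp : 2 ^ (k - 1) * 2 = 2 ^ k := by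
          rw [← pow_succ]; congr 1; omega
        have := Nat.one_le_two_pow (n := k - 1)
        omega
      have h2 := lsum_pow_lower (k - 1)
      have h3 := lsum_mono h1
      rw [cast_sub_one (by omega)] at h2
      rw [Nat.cast_one, one_mul]
      linarith
    have hsum : ∑ k ∈ Finset.Icc 1 (A - 1), ((k : ℝ) - 1) / 2
        = ((A - 1 : ℕ) : ℝ) * (((A - 1 : ℕ) : ℝ) - 1) / 4 := by
      rw [← Finset.sum_div, sum_Icc_sub_one]
      ring
    rw [hsum, hm1] at hSle
    rw [hm1]
    calc ((A : ℝ) - 2) / 4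
        = (1 / ((A : ℝ) - 1)) * (((A : ℝ) - 1) * (((A : ℝ) - 1) - 1) / 4) := by
          field_simp; ring
      _ ≤ _ := by
          apply mul_le_mul_of_nonneg_left hSle
          positivity
  · rcases le_or_gt 2 A with hA | hA
    · rw [VL_formula hA]
      have h1 : lsum (2 ^ (A - 1) - 1) ≤ lsum (2 ^ (A - 1)) := lsum_mono (Nat.sub_le _ _)
      have h2 := lsum_pow_upper (A - 1)
      have hpos : (0 : ℝ) < (A : ℝ) - 1 := by
        have : (2 : ℝ) ≤ (A : ℝ) := by exact_mod_cast hA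
        linarith
      rw [div_le_one hpos, ← cast_sub_one (show 1 ≤ A by omega)]
      linarith
    · interval_cases A
      · norm_num [VL, lsum]
      · norm_num [VL, lsum]
end
end
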